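/- Let V satisfy the Assumption, let M = sup{|∂ₓ^α V(t,x)| : (t,x) ∈ ℝ^{1+n}, |α| = 2}, and fix 0 < T < min{1, π/√M}. For t ∈ (0,T) and x, y, x′, ξ ∈ ℝⁿ, let (x^{(1)}(s), ξ^{(1)}(s)) solve the Hamiltonian system with x^{(1)}(0) = y, x^{(1)}(t) = x, and let (x^{(2)}(s), ξ^{(2)}(s)) solve it with x^{(2)}(t) = x′, ξ^{(2)}(t) = ξ. Then ξ^{(1)}(0) − ξ^{(2)}(0) = ((x − x′) − (y − x^{(2)}(0)))/t + R₁(t,x,y,x′,ξ), where R₁(t,x,y,x′,ξ) = (1/t) ∫₀ᵗ ∫₀^{s′} { ∇ₓV(τ, x^{(1)}(τ)) − ∇ₓV(τ, x^{(2)}(τ)) } dτ ds′, and there exists C > 0 such that |R₁(t,x,y,x′,ξ)| ≤ C t ( |x − x′| + |y − x^{(2)}(0)| ) for all 0 < t < T and x, y, x′, ξ ∈ ℝⁿ. -/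

import Mathlib

open MeasureTheory
open scoped Real

/-- The Assumption on the potential `V`: for every fixed `t`, `V(t,·) ∈ C²(ℝⁿ)`;
the spatial derivatives of order `≤ 2` are (jointly) continuous in `(t,x)`;
and the second spatial derivative is uniformly bounded. -/
def PotAssumption (n : ℕ) (V : ℝ → EuclideanSpace ℝ (Fin n) → ℝ) : Prop :=
  (∀ t, ContDiff ℝ 2 (V t)) ∧
  (Continuous fun p : ℝ × EuclideanSpace ℝ (Fin n) => V p.1 p.2) ∧
  (Continuous fun p : ℝ × EuclideanSpace ℝ (Fin n) => fderiv ℝ (V p.1) p.2) ∧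
  (Continuous fun p : ℝ × EuclideanSpace ℝ (Fin n) => iteratedFDeriv ℝ 2 (V p.1) p.2) ∧
  (∃ C > 0, ∀ t x, ‖iteratedFDeriv ℝ 2 (V t) x‖ ≤ C)

lemma grad_lip {n : ℕ} (f : EuclideanSpace ℝ (Fin n) → ℝ) (hf : ContDiff ℝ 2 f)
    {M : ℝ} (hM : ∀ x, ‖iteratedFDeriv ℝ 2 f x‖ ≤ M)
    (a b : EuclideanSpace ℝ (Fin n)) :
    ‖gradient f a - gradient f b‖ ≤ M * ‖a - b‖ := by
  have hd : ContDiff ℝ 1 (fderiv ℝ f) := hf.fderiv_right (by norm_num)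
  have key : ∀ x, ‖fderiv ℝ (fderiv ℝ f) x‖ ≤ M := by
    intro x
    have h0 : ‖iteratedFDeriv ℝ 0 (fderiv ℝ (fderiv ℝ f)) x‖
        = ‖fderiv ℝ (fderiv ℝ f) x‖ := norm_iteratedFDeriv_zero
    have h1 := norm_iteratedFDeriv_fderiv (𝕜 := ℝ) (f := fderiv ℝ f) (x := x) (n := 0)
    have h2 := norm_iteratedFDeriv_fderiv (𝕜 := ℝ) (f := f) (x := x) (n := 1)
    rw [← h0, h1, h2]
    exact hM x
  have hmv := Convex.norm_image_sub_le_of_norm_fderiv_le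
    (f := fderiv ℝ f) (fun x _ => (hd.differentiable (by norm_num)) x)
    (fun x _ => key x) convex_univ (Set.mem_univ b) (Set.mem_univ a)
  have : ‖gradient f a - gradient f b‖ = ‖fderiv ℝ f a - fderiv ℝ f b‖ := by
    rw [show gradient f a - gradient f b
        = (InnerProductSpace.toDual ℝ (EuclideanSpace ℝ (Fin n))).symm
            (fderiv ℝ f a - fderiv ℝ f b) by simp [gradient]]
    exact LinearIsometryEquiv.norm_map _ _
  rw [this]
  exact hmv

lemma two_point {n : ℕ} {M κ t T : ℝ} (hκ : 0 < κ) (hκT : κ * T < π)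
    (hMκ : M < κ ^ 2) (ht : 0 < t) (htT : t ≤ T)
    {u v a : ℝ → EuclideanSpace ℝ (Fin n)}
    (hu : ∀ s, HasDerivAt u (v s) s) (hv : ∀ s, HasDerivAt v (a s) s)
    (ha : ∀ s ∈ Set.Icc (0:ℝ) t, ‖a s‖ ≤ M * ‖u s‖) :
    ∀ s ∈ Set.Icc (0:ℝ) t, ‖u s‖ ≤ (Real.cos (κ * T / 2))⁻¹ * (‖u 0‖ + ‖u t‖) := by
  have hT : 0 < T := lt_of_lt_of_le ht htT
  have hhalf : κ * T / 2 < π / 2 := by linarith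
  have hδpos : 0 < Real.cos (κ * T / 2) := by
    apply Real.cos_pos_of_mem_Ioo
    constructor
    · nlinarith [Real.pi_pos]
    · exact hhalf
  set δ := Real.cos (κ * T / 2) with hδ
  set c : ℝ → ℝ := fun s => Real.cos (κ * (s - t / 2)) with hcdef
  have hcge : ∀ s ∈ Set.Icc (0:ℝ) t, δ ≤ c s := by
    intro s hs
    obtain ⟨hs0, hst⟩ := hs
    have habs : |κ * (s - t / 2)| ≤ κ * T / 2 := by
      rw [abs_mul, abs_of_pos hκ]
      have h2 : |s - t / 2| ≤ t / 2 := by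
        rw [abs_le]; constructor <;> linarith
      nlinarith
    have := Real.cos_le_cos_of_nonneg_of_le_pi (abs_nonneg (κ * (s - t/2)))
      (by linarith [Real.pi_pos] : κ * T / 2 ≤ π) habs
    rwa [Real.cos_abs] at this
  have hcpos : ∀ s ∈ Set.Icc (0:ℝ) t, 0 < c s := fun s hs => lt_of_lt_of_le hδpos (hcge s hs)
  have hcle1 : ∀ s : ℝ, c s ≤ 1 := fun s => Real.cos_le_one _
  have hθ : ∀ s : ℝ, HasDerivAt (fun s => κ * (s - t / 2)) κ s := by
    intro s
    simpa using ((hasDerivAt_id s).sub_const (t / 2)).const_mul κ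
  have hc1 : ∀ s : ℝ, HasDerivAt c (-κ * Real.sin (κ * (s - t / 2))) s := by
    intro s
    have := (Real.hasDerivAt_cos (κ * (s - t / 2))).comp s (hθ s)
    refine this.congr_deriv ?_
    ring
  have hc2 : ∀ s : ℝ, HasDerivAt (fun s => -κ * Real.sin (κ * (s - t / 2)))
      (-κ ^ 2 * c s) s := by
    intro s
    have := ((Real.hasDerivAt_sin (κ * (s - t / 2))).comp s (hθ s)).const_mul (-κ)
    refine this.congr_deriv ?_
    simp only [hcdef]
    ring
  have hucont : Continuous u := continuous_iff_continuousAt.2 fun s =>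
    (hu s).differentiableAt.continuousAt
  have hccont : Continuous c := Real.continuous_cos.comp (by continuity)
  -- the ratio function
  set ψ : ℝ → ℝ := fun s => ‖u s‖ / c s with hψdef
  have hψcont : ContinuousOn ψ (Set.Icc 0 t) :=
    ((hucont.norm).continuousOn).div hccont.continuousOn
      (fun s hs => (hcpos s hs).ne')
  obtain ⟨s₀, hs₀mem, hmax⟩ := isCompact_Icc.exists_isMaxOn
    (Set.nonempty_Icc.2 ht.le) hψcont
  have hψnonneg : ∀ s ∈ Set.Icc (0:ℝ) t, 0 ≤ ψ s := fun s hs =>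
    div_nonneg (norm_nonneg _) (hcpos s hs).le
  -- key claim
  have key : ψ s₀ ≤ max (ψ 0) (ψ t) := by
    by_contra hcon
    rw [not_le, max_lt_iff] at hcon
    obtain ⟨h0lt, htlt⟩ := hcon
    have h0mem : (0:ℝ) ∈ Set.Icc (0:ℝ) t := Set.left_mem_Icc.2 ht.le
    have htmem : t ∈ Set.Icc (0:ℝ) t := Set.right_mem_Icc.2 ht.le
    have hψ₀pos : 0 < ψ s₀ := lt_of_le_of_lt (hψnonneg 0 h0mem) h0lt
    have hs₀0 : s₀ ≠ 0 := fun h => by rw [h] at h0lt; exact lt_irrefl _ h0lt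
    have hs₀t : s₀ ≠ t := fun h => by rw [h] at htlt; exact lt_irrefl _ htlt
    have hs₀Ioo : s₀ ∈ Set.Ioo (0:ℝ) t :=
      ⟨lt_of_le_of_ne hs₀mem.1 (Ne.symm hs₀0), lt_of_le_of_ne hs₀mem.2 hs₀t⟩
    have hcs₀ : 0 < c s₀ := hcpos s₀ hs₀mem
    have hus₀ : 0 < ‖u s₀‖ := by
      have : ψ s₀ * c s₀ = ‖u s₀‖ := div_mul_cancel₀ _ hcs₀.ne'
      rw [← this]; positivity
    set e : EuclideanSpace ℝ (Fin n) := ‖u s₀‖⁻¹ • u s₀ with hedef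
    have henorm : ‖e‖ = 1 := by
      rw [hedef, norm_smul, norm_inv, norm_norm, inv_mul_cancel₀ hus₀.ne']
    set ψ₀ := ψ s₀ with hψ₀def
    set w : ℝ → ℝ := fun s => ψ₀ * c s - inner ℝ e (u s) with hwdef
    -- inner product derivatives
    have hg1 : ∀ s : ℝ, HasDerivAt (fun s => (inner ℝ e (u s) : ℝ)) (inner ℝ e (v s)) s := by
      intro s
      exact ((innerSL ℝ e).hasFDerivAt.comp_hasDerivAt s (hu s))
    have hg2 : ∀ s : ℝ, HasDerivAt (fun s => (inner ℝ e (v s) : ℝ)) (inner ℝ e (a s)) s := by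
      intro s
      exact ((innerSL ℝ e).hasFDerivAt.comp_hasDerivAt s (hv s))
    have hw1 : ∀ s : ℝ, HasDerivAt w (ψ₀ * (-κ * Real.sin (κ * (s - t / 2))) - inner ℝ e (v s)) s :=
      fun s => ((hc1 s).const_mul ψ₀).sub (hg1 s)
    have hw2 : ∀ s : ℝ, HasDerivAt
        (fun s => ψ₀ * (-κ * Real.sin (κ * (s - t / 2))) - (inner ℝ e (v s) : ℝ))
        (ψ₀ * (-κ ^ 2 * c s) - inner ℝ e (a s)) s :=
      fun s => ((hc2 s).const_mul ψ₀).sub (hg2 s)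
    have hderiv1 : deriv w = fun s => ψ₀ * (-κ * Real.sin (κ * (s - t / 2))) - inner ℝ e (v s) :=
      funext fun s => (hw1 s).deriv
    -- strict concavity of w on [0,t]
    have hwconc : StrictConcaveOn ℝ (Set.Icc (0:ℝ) t) w := by
      apply strictConcaveOn_of_deriv2_neg (convex_Icc 0 t)
        (Continuous.continuousOn (continuous_iff_continuousAt.2 fun s =>
          (hw1 s).differentiableAt.continuousAt))
      intro x hx
      rw [interior_Icc] at hx
      have hxIcc : x ∈ Set.Icc (0:ℝ) t := Set.Ioo_subset_Icc_self hx
      have h2 : deriv^[2] w x = ψ₀ * (-κ ^ 2 * c x) - inner ℝ e (a x) := by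
        rw [show (deriv^[2] w) = deriv (deriv w) from rfl, hderiv1]
        exact (hw2 x).deriv
      rw [h2]
      have hinner : -(M * ‖u x‖) ≤ (inner ℝ e (a x) : ℝ) := by
        have h1 : |(inner ℝ e (a x) : ℝ)| ≤ ‖a x‖ := by
          calc |(inner ℝ e (a x) : ℝ)| ≤ ‖e‖ * ‖a x‖ := abs_real_inner_le_norm _ _
          _ = ‖a x‖ := by rw [henorm, one_mul]
        have := (abs_le.1 h1).1
        linarith [ha x hxIcc]
      have hux : ‖u x‖ ≤ ψ₀ * c x := by
        have hmx := hmax hxIcc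
        have : ψ x ≤ ψ₀ := hmx
        have hcx := hcpos x hxIcc
        calc ‖u x‖ = ψ x * c x := (div_mul_cancel₀ _ hcx.ne').symm
        _ ≤ ψ₀ * c x := mul_le_mul_of_nonneg_right this hcx.le
      have hcx := hcpos x hxIcc
      have hκ2 : 0 < κ ^ 2 := by positivity
      have hprod : 0 < ψ₀ * c x := mul_pos hψ₀pos hcx
      have hMu : M * ‖u x‖ < κ ^ 2 * (ψ₀ * c x) := by
        rcases le_or_gt M 0 with hM | hM
        · have h1 : M * ‖u x‖ ≤ 0 := mul_nonpos_of_nonpos_of_nonneg hM (norm_nonneg _)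
          exact lt_of_le_of_lt h1 (mul_pos hκ2 hprod)
        · calc M * ‖u x‖ ≤ M * (ψ₀ * c x) := mul_le_mul_of_nonneg_left hux hM.le
          _ < κ ^ 2 * (ψ₀ * c x) := mul_lt_mul_of_pos_right hMκ hprod
      have hrw : ψ₀ * (-κ ^ 2 * c x) = -(κ ^ 2 * (ψ₀ * c x)) := by ring
      linarith
    -- w ≥ 0 at endpoints, w s₀ = 0
    have hwnonneg : ∀ s ∈ Set.Icc (0:ℝ) t, 0 ≤ w s := by
      intro s hs
      have h1 : (inner ℝ e (u s) : ℝ) ≤ ‖u s‖ := by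
        calc (inner ℝ e (u s) : ℝ) ≤ ‖e‖ * ‖u s‖ := real_inner_le_norm _ _
        _ = ‖u s‖ := by rw [henorm, one_mul]
      have h2 : ‖u s‖ ≤ ψ₀ * c s := by
        have hcx := hcpos s hs
        calc ‖u s‖ = ψ s * c s := (div_mul_cancel₀ _ hcx.ne').symm
        _ ≤ ψ₀ * c s := mul_le_mul_of_nonneg_right (hmax hs) hcx.le
      simp only [hwdef]
      linarith
    have hws₀ : w s₀ = 0 := by
      have h1 : (inner ℝ e (u s₀) : ℝ) = ‖u s₀‖ := by
        rw [hedef, real_inner_smul_left, real_inner_self_eq_norm_mul_norm]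
        field_simp
      have h2 : ψ₀ * c s₀ = ‖u s₀‖ := div_mul_cancel₀ _ hcs₀.ne'
      simp only [hwdef]
      rw [h1, h2, sub_self]
    -- strict concavity contradiction
    have hlam1 : (0:ℝ) < (t - s₀) / t := div_pos (by linarith [hs₀Ioo.2]) ht
    have hlam2 : (0:ℝ) < s₀ / t := div_pos hs₀Ioo.1 ht
    have hlamsum : (t - s₀) / t + s₀ / t = 1 := by field_simp; ring
    have hne : (0:ℝ) ≠ t := ht.ne
    have := hwconc.2 (Set.left_mem_Icc.2 ht.le) (Set.right_mem_Icc.2 ht.le) hne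
      hlam1 hlam2 hlamsum
    have hpt : ((t - s₀) / t) • (0:ℝ) + (s₀ / t) • t = s₀ := by
      simp only [smul_eq_mul, mul_zero, zero_add]
      exact div_mul_cancel₀ _ ht.ne'
    rw [hpt] at this
    have h0' := hwnonneg 0 (Set.left_mem_Icc.2 ht.le)
    have ht' := hwnonneg t (Set.right_mem_Icc.2 ht.le)
    have : (0:ℝ) < w s₀ := by
      calc (0:ℝ) ≤ ((t - s₀) / t) • w 0 + (s₀ / t) • w t := by
            simp only [smul_eq_mul]; positivity
      _ < w s₀ := this
    rw [hws₀] at this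
    exact lt_irrefl _ this
  -- conclude
  intro s hs
  have hcs := hcpos s hs
  have hψ0le : ψ 0 ≤ δ⁻¹ * (‖u 0‖ + ‖u t‖) := by
    have h0mem : (0:ℝ) ∈ Set.Icc (0:ℝ) t := Set.left_mem_Icc.2 ht.le
    have : ψ 0 ≤ ‖u 0‖ / δ := by
      apply div_le_div_of_nonneg_left (norm_nonneg _) hδpos (hcge 0 h0mem)
    calc ψ 0 ≤ ‖u 0‖ / δ := this
    _ ≤ δ⁻¹ * (‖u 0‖ + ‖u t‖) := by
        rw [div_eq_inv_mul]
        exact mul_le_mul_of_nonneg_left (by linarith [norm_nonneg (u t)]) (by positivity)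
  have hψtle : ψ t ≤ δ⁻¹ * (‖u 0‖ + ‖u t‖) := by
    have htmem : t ∈ Set.Icc (0:ℝ) t := Set.right_mem_Icc.2 ht.le
    have : ψ t ≤ ‖u t‖ / δ := by
      apply div_le_div_of_nonneg_left (norm_nonneg _) hδpos (hcge t htmem)
    calc ψ t ≤ ‖u t‖ / δ := this
    _ ≤ δ⁻¹ * (‖u 0‖ + ‖u t‖) := by
        rw [div_eq_inv_mul]
        exact mul_le_mul_of_nonneg_left (by linarith [norm_nonneg (u 0)]) (by positivity)
  have hψs : ψ s ≤ δ⁻¹ * (‖u 0‖ + ‖u t‖) :=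
    le_trans (le_trans (hmax hs) key) (max_le hψ0le hψtle)
  have hψ₀nonneg : 0 ≤ ψ s := hψnonneg s hs
  calc ‖u s‖ = ψ s * c s := (div_mul_cancel₀ _ hcs.ne').symm
  _ ≤ ψ s * 1 := mul_le_mul_of_nonneg_left (hcle1 s) hψ₀nonneg
  _ = ψ s := mul_one _
  _ ≤ δ⁻¹ * (‖u 0‖ + ‖u t‖) := hψs

/-- Under the Assumption, with `M = sup |∂ₓ²V|` and
`0 < T < min{1, π/√M}`, whenever `(x⁽¹⁾, ξ⁽¹⁾)` solves the Hamiltonian system with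
`x⁽¹⁾(0) = y`, `x⁽¹⁾(t) = x` and `(x⁽²⁾, ξ⁽²⁾)` solves it with `x⁽²⁾(t) = x′`,
`ξ⁽²⁾(t) = ξ`, one has
`ξ⁽¹⁾(0) − ξ⁽²⁾(0) = ((x − x′) − (y − x⁽²⁾(0)))/t + R₁` with
`R₁ = (1/t)∫₀ᵗ∫₀^{s′} {∇ₓV(τ,x⁽¹⁾(τ)) − ∇ₓV(τ,x⁽²⁾(τ))} dτ ds′`, and there is `C > 0`
with `|R₁| ≤ C t (|x − x′| + |y − x⁽²⁾(0)|)` for all `0 < t < T`. -/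
theorem stmt_15 (n : ℕ) (V : ℝ → EuclideanSpace ℝ (Fin n) → ℝ) (hV : PotAssumption n V)
    (M : ℝ)
    (hM : M = ⨆ p : ℝ × EuclideanSpace ℝ (Fin n), ‖iteratedFDeriv ℝ 2 (V p.1) p.2‖)
    (T : ℝ) (hT : 0 < T) (hT1 : T < 1) (hTM : T * Real.sqrt M < π) :
    ∃ C > 0, ∀ t ∈ Set.Ioo (0 : ℝ) T, ∀ x y x' ξ : EuclideanSpace ℝ (Fin n),
      ∀ x1 ξ1 x2 ξ2 : ℝ → EuclideanSpace ℝ (Fin n),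
        (∀ s, HasDerivAt x1 (ξ1 s) s ∧ HasDerivAt ξ1 (-(gradient (V s) (x1 s))) s) →
        x1 0 = y → x1 t = x →
        (∀ s, HasDerivAt x2 (ξ2 s) s ∧ HasDerivAt ξ2 (-(gradient (V s) (x2 s))) s) →
        x2 t = x' → ξ2 t = ξ →
        (ξ1 0 - ξ2 0 = t⁻¹ • ((x - x') - (y - x2 0)) +
            t⁻¹ • ∫ s' in (0 : ℝ)..t,
              (∫ τ in (0 : ℝ)..s', (gradient (V τ) (x1 τ) - gradient (V τ) (x2 τ)))) ∧
          ‖t⁻¹ • ∫ s' in (0 : ℝ)..t,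
              (∫ τ in (0 : ℝ)..s', (gradient (V τ) (x1 τ) - gradient (V τ) (x2 τ)))‖
            ≤ C * t * (‖x - x'‖ + ‖y - x2 0‖) := by
  obtain ⟨hC2, -, hfd_cont, -, K, hKpos, hK⟩ := hV
  have hbdd : BddAbove (Set.range fun p : ℝ × EuclideanSpace ℝ (Fin n) =>
      ‖iteratedFDeriv ℝ 2 (V p.1) p.2‖) := ⟨K, by rintro r ⟨p, rfl⟩; exact hK p.1 p.2⟩
  have hMb : ∀ s z, ‖iteratedFDeriv ℝ 2 (V s) z‖ ≤ M := fun s z => by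
    rw [hM]; exact le_ciSup hbdd (s, z)
  have hM0 : 0 ≤ M := le_trans (norm_nonneg _) (hMb 0 0)
  have hπ : (0:ℝ) < π := Real.pi_pos
  have hsqrt0 : 0 ≤ Real.sqrt M := Real.sqrt_nonneg M
  set κ : ℝ := (π + T * Real.sqrt M) / (2 * T) with hκdef
  have hκpos : 0 < κ := by
    apply div_pos
    · nlinarith
    · linarith
  have hκT : κ * T < π := by
    have h1 : κ * T = (π + T * Real.sqrt M) / 2 := by
      rw [hκdef]; field_simp
    rw [h1]; linarith
  have hMκ : M < κ ^ 2 := by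
    have hsq : Real.sqrt M < κ := by
      rw [hκdef, lt_div_iff₀ (by linarith : (0:ℝ) < 2 * T)]
      nlinarith
    nlinarith [Real.sq_sqrt hM0]
  have hhalf : κ * T / 2 < π / 2 := by linarith
  have hδpos : 0 < Real.cos (κ * T / 2) := by
    apply Real.cos_pos_of_mem_Ioo
    constructor
    · nlinarith [mul_pos hκpos hT]
    · exact hhalf
  set δ := Real.cos (κ * T / 2) with hδdef
  refine ⟨(M + 1) / δ, by positivity, ?_⟩
  rintro t ⟨ht0, htT⟩ x y x' ξ x1 ξ1 x2 ξ2 h1 hy hx h2 hx' hξ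
  subst hy hx hx'
  -- path continuity
  have hx1c : Continuous x1 := continuous_iff_continuousAt.2 fun s =>
    (h1 s).1.differentiableAt.continuousAt
  have hx2c : Continuous x2 := continuous_iff_continuousAt.2 fun s =>
    (h2 s).1.differentiableAt.continuousAt
  set G : ℝ → EuclideanSpace ℝ (Fin n) :=
    fun τ => gradient (V τ) (x1 τ) - gradient (V τ) (x2 τ) with hGdef
  set u : ℝ → EuclideanSpace ℝ (Fin n) := fun s => x1 s - x2 s with hudef
  set v : ℝ → EuclideanSpace ℝ (Fin n) := fun s => ξ1 s - ξ2 s with hvdef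
  have hu : ∀ s, HasDerivAt u (v s) s := fun s => (h1 s).1.sub (h2 s).1
  have hvd : ∀ s, HasDerivAt v (-G s) s := fun s => by
    have h := (h1 s).2.sub (h2 s).2
    refine h.congr_deriv ?_
    simp only [hGdef]
    abel
  have hvc : Continuous v := continuous_iff_continuousAt.2 fun s =>
    (hvd s).differentiableAt.continuousAt
  have hgc : ∀ (z : ℝ → EuclideanSpace ℝ (Fin n)), Continuous z →
      Continuous (fun s => gradient (V s) (z s)) := by
    intro z hz
    have : (fun s => gradient (V s) (z s)) = fun s =>
        (InnerProductSpace.toDual ℝ (EuclideanSpace ℝ (Fin n))).symm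
          ((fun p : ℝ × EuclideanSpace ℝ (Fin n) => fderiv ℝ (V p.1) p.2) (s, z s)) := rfl
    rw [this]
    exact (LinearIsometryEquiv.continuous _).comp (hfd_cont.comp (continuous_id.prodMk hz))
  have hGc : Continuous G := (hgc x1 hx1c).sub (hgc x2 hx2c)
  have hGle : ∀ s, ‖G s‖ ≤ M * ‖u s‖ := fun s =>
    grad_lip (V s) (hC2 s) (fun z => hMb s z) (x1 s) (x2 s)
  -- two-point estimate
  have hsup : ∀ s ∈ Set.Icc (0:ℝ) t, ‖u s‖ ≤ δ⁻¹ * (‖u 0‖ + ‖u t‖) := by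
    have := two_point (a := fun s => -G s) hκpos hκT hMκ ht0 htT.le hu hvd
      (fun s _ => by rw [norm_neg]; exact hGle s)
    exact this
  -- FTC identities
  have hInt : ∀ r s : ℝ, IntervalIntegrable G volume r s := fun r s =>
    hGc.intervalIntegrable r s
  have hva : ∀ s' : ℝ, v s' = v 0 - ∫ τ in (0:ℝ)..s', G τ := by
    intro s'
    have h := intervalIntegral.integral_eq_sub_of_hasDerivAt
      (f := v) (f' := fun τ => -G τ) (fun τ _ => hvd τ)
      ((hGc.neg).intervalIntegrable 0 s')
    rw [intervalIntegral.integral_neg] at h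
    have h2 : v s' - v 0 = -∫ τ in (0:ℝ)..s', G τ := by rw [← h]
    rw [sub_eq_iff_eq_add] at h2
    rw [h2]; abel
  have hAc : Continuous (fun s' => ∫ τ in (0:ℝ)..s', G τ) :=
    intervalIntegral.continuous_primitive hInt 0
  have hFTCu : ∫ s' in (0:ℝ)..t, v s' = u t - u 0 :=
    intervalIntegral.integral_eq_sub_of_hasDerivAt (fun s _ => hu s)
      (hvc.intervalIntegrable 0 t)
  have hsplit : ∫ s' in (0:ℝ)..t, v s'
      = t • v 0 - ∫ s' in (0:ℝ)..t, (∫ τ in (0:ℝ)..s', G τ) := by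
    have h1 : ∫ s' in (0:ℝ)..t, v s'
        = ∫ s' in (0:ℝ)..t, (v 0 - ∫ τ in (0:ℝ)..s', G τ) := by
      apply intervalIntegral.integral_congr
      intro s' _
      exact hva s'
    rw [h1, intervalIntegral.integral_sub intervalIntegrable_const
      (hAc.intervalIntegrable 0 t), intervalIntegral.integral_const, sub_zero]
  have key : u t - u 0 = t • v 0 - ∫ s' in (0:ℝ)..t, (∫ τ in (0:ℝ)..s', G τ) := by
    rw [← hFTCu, hsplit]
  constructor
  · -- identity
    show v 0 = t⁻¹ • ((x1 t - x2 t) - (x1 0 - x2 0)) +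
      t⁻¹ • ∫ s' in (0:ℝ)..t, (∫ τ in (0:ℝ)..s', G τ)
    have hD : (x1 t - x2 t) - (x1 0 - x2 0)
        = t • v 0 - ∫ s' in (0:ℝ)..t, (∫ τ in (0:ℝ)..s', G τ) := key
    rw [hD, smul_sub, smul_smul, inv_mul_cancel₀ ht0.ne', one_smul]
    abel
  · -- bound
    set S := δ⁻¹ * (‖u 0‖ + ‖u t‖) with hSdef
    have hS0 : 0 ≤ S := by positivity
    have hMS0 : 0 ≤ M * S := mul_nonneg hM0 hS0
    have hinner : ∀ s' ∈ Set.uIoc (0:ℝ) t, ‖∫ τ in (0:ℝ)..s', G τ‖ ≤ M * S * t := by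
      intro s' hs'
      rw [Set.uIoc_of_le ht0.le] at hs'
      obtain ⟨hs'0, hs't⟩ := hs'
      have hb : ∀ τ ∈ Set.uIoc (0:ℝ) s', ‖G τ‖ ≤ M * S := by
        intro τ hτ
        rw [Set.uIoc_of_le hs'0.le] at hτ
        have hτIcc : τ ∈ Set.Icc (0:ℝ) t := ⟨hτ.1.le, le_trans hτ.2 hs't⟩
        calc ‖G τ‖ ≤ M * ‖u τ‖ := hGle τ
        _ ≤ M * S := mul_le_mul_of_nonneg_left (hsup τ hτIcc) hM0
      calc ‖∫ τ in (0:ℝ)..s', G τ‖ ≤ M * S * |s' - 0| :=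
            intervalIntegral.norm_integral_le_of_norm_le_const hb
      _ ≤ M * S * t := by
          rw [sub_zero, abs_of_pos hs'0]
          exact mul_le_mul_of_nonneg_left hs't hMS0
    have houter : ‖∫ s' in (0:ℝ)..t, (∫ τ in (0:ℝ)..s', G τ)‖ ≤ M * S * t * t := by
      calc ‖∫ s' in (0:ℝ)..t, (∫ τ in (0:ℝ)..s', G τ)‖ ≤ M * S * t * |t - 0| :=
            intervalIntegral.norm_integral_le_of_norm_le_const hinner
      _ = M * S * t * t := by rw [sub_zero, abs_of_pos ht0]
    show ‖t⁻¹ • ∫ s' in (0:ℝ)..t, (∫ τ in (0:ℝ)..s', G τ)‖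
        ≤ (M + 1) / δ * t * (‖x1 t - x2 t‖ + ‖x1 0 - x2 0‖)
    have hnorm : ‖t⁻¹ • ∫ s' in (0:ℝ)..t, (∫ τ in (0:ℝ)..s', G τ)‖
        = t⁻¹ * ‖∫ s' in (0:ℝ)..t, (∫ τ in (0:ℝ)..s', G τ)‖ := by
      rw [norm_smul, Real.norm_eq_abs, abs_of_pos (inv_pos.2 ht0)]
    rw [hnorm]
    have hstep : t⁻¹ * ‖∫ s' in (0:ℝ)..t, (∫ τ in (0:ℝ)..s', G τ)‖ ≤ M * S * t := by
      have h2 : t⁻¹ * (M * S * t * t) = M * S * t := by field_simp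
      calc t⁻¹ * ‖∫ s' in (0:ℝ)..t, (∫ τ in (0:ℝ)..s', G τ)‖
          ≤ t⁻¹ * (M * S * t * t) :=
            mul_le_mul_of_nonneg_left houter (inv_pos.2 ht0).le
      _ = M * S * t := h2
    refine le_trans hstep ?_
    have hrw1 : M * S * t = M * (δ⁻¹ * t * (‖x1 t - x2 t‖ + ‖x1 0 - x2 0‖)) := by
      rw [hSdef]
      show M * (δ⁻¹ * (‖x1 0 - x2 0‖ + ‖x1 t - x2 t‖)) * t
        = M * (δ⁻¹ * t * (‖x1 t - x2 t‖ + ‖x1 0 - x2 0‖))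
      ring
    have hrw2 : (M + 1) / δ * t * (‖x1 t - x2 t‖ + ‖x1 0 - x2 0‖)
        = (M + 1) * (δ⁻¹ * t * (‖x1 t - x2 t‖ + ‖x1 0 - x2 0‖)) := by
      rw [div_eq_mul_inv]; ring
    rw [hrw1, hrw2]
    exact mul_le_mul_of_nonneg_right (by linarith) (by positivity)
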